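/- For any symmetric polynomial F in n variables, the coefficient of a permutation σ in F(J_1,...,J_n) ∈ Z[S_n] depends only on the cycle-type of σ; i.e., conjugate permutations have equal coefficients. -/

import Mathlib

open Finset
open scoped Classical

/-- The Jucys-Murphy element `J_i = Σ_{j<i} (j i)` in the group algebra `ℤ[S_n]`. -/
noncomputable def JM (n : ℕ) (i : Fin n) : MonoidAlgebra ℤ (Equiv.Perm (Fin n)) :=
  ∑ j ∈ Finset.univ.filter (fun j : Fin n => j < i),
    MonoidAlgebra.of ℤ (Equiv.Perm (Fin n)) (Equiv.swap j i)

/-- Evaluation of a multivariate polynomial at a family of elements of a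
(possibly noncommutative) ring, multiplying the variables in increasing order. -/
noncomputable def mvEval {n : ℕ} {A : Type*} [Ring A]
    (F : MvPolynomial (Fin n) ℤ) (g : Fin n → A) : A :=
  (AddMonoidAlgebra.coeff F).sum (fun d a => a • ((List.finRange n).map (fun i => g i ^ d i)).prod)

/-- The coefficient of a group element in an element of the group algebra. -/
noncomputable def coeffOf {G : Type*} (x : MonoidAlgebra ℤ G) (g : G) : ℤ :=
  x.coeff g

section RingPart
variable {A : Type*} [Ring A]

lemma powsum_step (x y : A) (h : Commute x y) (m : ℕ) :
    x^(m+2) + y^(m+2) = (x+y)*(x^(m+1)+y^(m+1)) - x*y*(x^m+y^m) := by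
  have e1 : x*(y*x^m) = y*x^(m+1) := by
    rw [← mul_assoc, h.eq, mul_assoc, ← pow_succ']
  have e2 : x*(y*y^m) = x*y^(m+1) := by rw [← pow_succ']
  rw [add_mul, mul_add, mul_add, mul_add, mul_assoc x y, mul_assoc x y, e1, e2,
    ← pow_succ', ← pow_succ']
  abel

lemma powsum_eq (a b s : A) (hss : s*s = 1) (hab : a*b = b*a)
    (hsa : s*a = b*s - 1) (hsb : s*b = a*s + 1) :
    ∀ m : ℕ, (b-s)^m + (a+s)^m = a^m + b^m := by
  have h1 : (b-s)*(a+s) = a*b := by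
    rw [sub_mul, mul_add, mul_add, hsa, hss, hab]; abel
  have h2 : (a+s)*(b-s) = a*b := by
    rw [add_mul, mul_sub, mul_sub, hsb, hss]; abel
  have hc : Commute (b-s) (a+s) := by unfold Commute SemiconjBy; rw [h1, h2]
  have hc' : Commute a b := hab
  have h3 : (b-s)+(a+s) = a+b := by abel
  have main : ∀ m : ℕ, ((b-s)^m + (a+s)^m = a^m + b^m) ∧
      ((b-s)^(m+1) + (a+s)^(m+1) = a^(m+1) + b^(m+1)) := by
    intro m
    induction m with
    | zero => simp [h3]
    | succ k ih =>
      refine ⟨ih.2, ?_⟩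
      rw [powsum_step _ _ hc k, powsum_step _ _ hc' k, h3, h1, ih.1, ih.2]
  exact fun m => (main m).1

lemma pair_half (x y : A) (hxy : Commute x y) (p q : ℕ) (hq : q ≤ p) :
    x^p*y^q + x^q*y^p = x^q*y^q * (x^(p-q) + y^(p-q)) := by
  obtain ⟨r, rfl⟩ : ∃ r, p = q + r := ⟨p - q, by omega⟩
  rw [Nat.add_sub_cancel_left, mul_add]
  congr 1
  · rw [pow_add, mul_assoc, ((hxy.pow_pow r q).eq : x^r * y^q = y^q * x^r),
      ← mul_assoc]
  · rw [pow_add, mul_assoc]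

lemma pair_eq (a b s : A) (hss : s*s = 1) (hab : a*b = b*a)
    (hsa : s*a = b*s - 1) (hsb : s*b = a*s + 1) (p q : ℕ) :
    (b-s)^p*(a+s)^q + (b-s)^q*(a+s)^p = a^p*b^q + a^q*b^p := by
  have h1 : (b-s)*(a+s) = a*b := by
    rw [sub_mul, mul_add, mul_add, hsa, hss, hab]; abel
  have h2 : (a+s)*(b-s) = a*b := by
    rw [add_mul, mul_sub, mul_sub, hsb, hss]; abel
  have hc : Commute (b-s) (a+s) := by unfold Commute SemiconjBy; rw [h1, h2]
  have hc' : Commute a b := hab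
  have hqq : ∀ q : ℕ, (b-s)^q*(a+s)^q = a^q*b^q := by
    intro q
    rw [← hc.mul_pow, ← hc'.mul_pow, h1]
  have key : ∀ p q : ℕ, q ≤ p →
      (b-s)^p*(a+s)^q + (b-s)^q*(a+s)^p = a^p*b^q + a^q*b^p := by
    intro p q hle
    rw [pair_half _ _ hc p q hle, pair_half _ _ hc' p q hle, hqq,
      powsum_eq a b s hss hab hsa hsb]
  rcases le_total q p with hle | hle
  · exact key p q hle
  · rw [add_comm, add_comm (a^p*b^q)]; exact key q p hle

end RingPart

lemma JM_comm_of (n : ℕ) (τ : Equiv.Perm (Fin n)) (j : Fin n) (hj : τ j = j)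
    (h : ∀ m, τ m < j ↔ m < j) :
    MonoidAlgebra.of ℤ (Equiv.Perm (Fin n)) τ * JM n j
      = JM n j * MonoidAlgebra.of ℤ (Equiv.Perm (Fin n)) τ := by
  unfold JM
  rw [Finset.mul_sum, Finset.sum_mul]
  refine Finset.sum_nbij' (fun k => τ k) (fun k => τ⁻¹ k) ?_ ?_ ?_ ?_ ?_
  · intro k hk
    simp only [Finset.mem_filter, Finset.mem_univ, true_and] at *
    exact (h k).2 hk
  · intro k hk
    simp only [Finset.mem_filter, Finset.mem_univ, true_and] at *
    have := (h (τ⁻¹ k))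
    rw [show τ (τ⁻¹ k) = k from Equiv.apply_symm_apply τ k] at this
    exact this.1 hk
  · intro k _; exact Equiv.symm_apply_apply τ k
  · intro k _; exact Equiv.apply_symm_apply τ k
  · intro k _
    rw [← map_mul, ← map_mul]
    congr 1
    have hs := Equiv.swap_apply_apply τ k j
    rw [hj] at hs
    show τ * Equiv.swap k j = Equiv.swap (τ k) j * τ
    rw [hs, mul_assoc, inv_mul_cancel, mul_one]

lemma JM_commute (n : ℕ) (p q : Fin n) : Commute (JM n p) (JM n q) := by
  have aux : ∀ p q : Fin n, p < q → Commute (JM n p) (JM n q) := by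
    intro p q hpq
    rw [show JM n p = ∑ k ∈ Finset.univ.filter (fun k : Fin n => k < p),
      MonoidAlgebra.of ℤ (Equiv.Perm (Fin n)) (Equiv.swap k p) from rfl]
    refine Commute.sum_left _ _ _ fun k hk => ?_
    simp only [Finset.mem_filter, Finset.mem_univ, true_and] at hk
    have hkq : k < q := hk.trans hpq
    have hkp : k ≠ p := ne_of_lt hk
    exact (JM_comm_of n (Equiv.swap k p) q
      (Equiv.swap_apply_of_ne_of_ne (ne_of_gt hkq) (ne_of_gt hpq)) (by
        intro m
        rcases eq_or_ne m k with rfl | hmk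
        · rw [Equiv.swap_apply_left]
          exact ⟨fun _ => hkq, fun _ => hpq⟩
        rcases eq_or_ne m p with rfl | hmp
        · rw [Equiv.swap_apply_right]
          exact ⟨fun _ => hpq, fun _ => hkq⟩
        · rw [Equiv.swap_apply_of_ne_of_ne hmk hmp]))
  rcases lt_trichotomy p q with h | h | h
  · exact aux p q h
  · rw [h]
  · exact (aux q p h).symm

noncomputable def conjHom {A : Type*} [Ring A] (s : A) (hss : s * s = 1) : A →+* A where
  toFun x := s * x * s
  map_one' := by show s * 1 * s = 1; rw [mul_one, hss]
  map_mul' x y := by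
    have h : s * x * s * (s * y * s) = s * x * ((s*s) * (y * s)) := by
      simp only [mul_assoc]
    show s * (x * y) * s = s * x * s * (s * y * s)
    rw [h, hss, one_mul]
    simp only [mul_assoc]
  map_zero' := by show s * 0 * s = 0; rw [mul_zero, zero_mul]
  map_add' x y := by simp only [mul_add, add_mul]

lemma map_mvEval {n : ℕ} {A : Type*} [Ring A] (φ : A →+* A)
    (F : MvPolynomial (Fin n) ℤ) (g : Fin n → A) :
    φ (mvEval F g) = mvEval F (fun j => φ (g j)) := by
  unfold mvEval
  rw [Finsupp.sum, Finsupp.sum, map_sum]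
  refine Finset.sum_congr rfl fun d _ => ?_
  rw [map_zsmul]
  congr 1
  rw [map_list_prod, List.map_map]
  refine congrArg _ (List.map_congr_left fun l _ => ?_)
  simp [Function.comp, map_pow]

lemma prod_split {A : Type*} [Ring A] (n i : ℕ) (h1 : i + 1 < n) (f : Fin n → A) :
    ((List.finRange n).map f).prod =
      (((List.finRange n).take i).map f).prod *
        (f ⟨i, Nat.lt_of_succ_lt h1⟩ * (f ⟨i+1, h1⟩ *
          (((List.finRange n).drop (i+2)).map f).prod)) := by
  have hlen : (List.finRange n).length = n := List.length_finRange
  have hi : i < (List.finRange n).length := by omega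
  have hi1 : i + 1 < (List.finRange n).length := by omega
  conv_lhs => rw [← List.take_append_drop i (List.finRange n)]
  rw [List.map_append, List.prod_append]
  congr 1
  rw [List.drop_eq_getElem_cons hi, List.drop_eq_getElem_cons hi1,
    List.map_cons, List.map_cons, List.prod_cons, List.prod_cons]
  congr 2
  · simp [List.getElem_finRange, Fin.ext_iff]
  · congr 1
    simp [List.getElem_finRange, Fin.ext_iff]

lemma mem_take_lt (n i : ℕ) (l : Fin n) (hl : l ∈ (List.finRange n).take i) : (l : ℕ) < i := by
  obtain ⟨m, hm, he⟩ := List.mem_iff_getElem.1 hl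
  have hm' : m < i := by
    have := hm
    simp [List.length_take, List.length_finRange] at this
    omega
  have : ((List.finRange n).take i)[m] = (List.finRange n)[m]'(by
      simp [List.length_finRange]
      have := hm; simp [List.length_take, List.length_finRange] at this; omega) :=
    List.getElem_take
  rw [this, List.getElem_finRange] at he
  rw [← he]
  simpa using hm'

lemma mem_drop_ge (n i : ℕ) (l : Fin n) (hl : l ∈ (List.finRange n).drop i) : i ≤ (l : ℕ) := by
  obtain ⟨m, hm, he⟩ := List.mem_iff_getElem.1 hl
  rw [List.getElem_drop, List.getElem_finRange] at he
  rw [← he]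
  simp

lemma adj_invariant (n i : ℕ) (h1 : i + 1 < n) (F : MvPolynomial (Fin n) ℤ)
    (hF : F.IsSymmetric) :
    MonoidAlgebra.of ℤ (Equiv.Perm (Fin n)) (Equiv.swap ⟨i, Nat.lt_of_succ_lt h1⟩ ⟨i+1, h1⟩)
        * mvEval F (JM n)
      = mvEval F (JM n)
        * MonoidAlgebra.of ℤ (Equiv.Perm (Fin n)) (Equiv.swap ⟨i, Nat.lt_of_succ_lt h1⟩ ⟨i+1, h1⟩) := by
  set ii : Fin n := ⟨i, Nat.lt_of_succ_lt h1⟩ with hii_def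
  set jj : Fin n := ⟨i+1, h1⟩ with hjj_def
  set s : Equiv.Perm (Fin n) := Equiv.swap ii jj with hs_def
  set S : MonoidAlgebra ℤ (Equiv.Perm (Fin n)) := MonoidAlgebra.of ℤ _ s with hS_def
  have hij : ii ≠ jj := by simp [hii_def, hjj_def, Fin.ext_iff]
  have hsii : s ii = jj := Equiv.swap_apply_left _ _
  have hsjj : s jj = ii := Equiv.swap_apply_right _ _
  have hss : s * s = 1 := Equiv.swap_mul_self _ _
  have hSS : S * S = 1 := by rw [hS_def, ← map_mul, hss, map_one]
  -- the group-level conjugation identities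
  have g1 : ∀ k : Fin n, (k : ℕ) < i → s * Equiv.swap k ii = Equiv.swap k jj * s := by
    intro k hk
    have hk1 : k ≠ ii := by simp [hii_def, Fin.ext_iff]; omega
    have hk2 : k ≠ jj := by simp [hjj_def, Fin.ext_iff]; omega
    have hs1 := Equiv.swap_apply_apply s k ii
    rw [Equiv.swap_apply_of_ne_of_ne hk1 hk2, hsii] at hs1
    rw [hs1, mul_assoc, inv_mul_cancel, mul_one]
  have g2 : ∀ k : Fin n, (k : ℕ) < i → s * Equiv.swap k jj = Equiv.swap k ii * s := by
    intro k hk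
    have hk1 : k ≠ ii := by simp [hii_def, Fin.ext_iff]; omega
    have hk2 : k ≠ jj := by simp [hjj_def, Fin.ext_iff]; omega
    have hs1 := Equiv.swap_apply_apply s k jj
    rw [Equiv.swap_apply_of_ne_of_ne hk1 hk2, hsjj] at hs1
    rw [hs1, mul_assoc, inv_mul_cancel, mul_one]
  -- decomposition of JM n jj
  set T : MonoidAlgebra ℤ (Equiv.Perm (Fin n)) :=
    ∑ k ∈ Finset.univ.filter (fun k : Fin n => k < ii),
      MonoidAlgebra.of ℤ (Equiv.Perm (Fin n)) (Equiv.swap k jj) with hT_def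
  have hfilter : Finset.univ.filter (fun k : Fin n => k < jj)
      = insert ii (Finset.univ.filter (fun k : Fin n => k < ii)) := by
    ext k
    simp only [Finset.mem_filter, Finset.mem_univ, true_and, Finset.mem_insert,
      Fin.lt_def, hii_def, hjj_def, Fin.ext_iff]
    constructor
    · intro h; omega
    · intro h; omega
  have hJMjj : JM n jj = S + T := by
    rw [show JM n jj = ∑ k ∈ Finset.univ.filter (fun k : Fin n => k < jj),
      MonoidAlgebra.of ℤ (Equiv.Perm (Fin n)) (Equiv.swap k jj) from rfl]
    rw [hfilter, Finset.sum_insert (by simp)]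
  have hmemlt : ∀ k : Fin n, k ∈ Finset.univ.filter (fun k : Fin n => k < ii) → (k : ℕ) < i := by
    intro k hk
    simp only [Finset.mem_filter, Finset.mem_univ, true_and, Fin.lt_def] at hk
    exact hk
  have hsa : S * JM n ii = JM n jj * S - 1 := by
    have hTS : S * JM n ii = T * S := by
      rw [show JM n ii = ∑ k ∈ Finset.univ.filter (fun k : Fin n => k < ii),
        MonoidAlgebra.of ℤ (Equiv.Perm (Fin n)) (Equiv.swap k ii) from rfl,
        hT_def, Finset.mul_sum, Finset.sum_mul]
      refine Finset.sum_congr rfl fun k hk => ?_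
      rw [hS_def, ← map_mul, ← map_mul, g1 k (hmemlt k hk)]
    rw [hTS, hJMjj, add_mul, hSS]
    abel
  have hsb : S * JM n jj = JM n ii * S + 1 := by
    have hST : S * T = JM n ii * S := by
      rw [show JM n ii = ∑ k ∈ Finset.univ.filter (fun k : Fin n => k < ii),
        MonoidAlgebra.of ℤ (Equiv.Perm (Fin n)) (Equiv.swap k ii) from rfl,
        hT_def, Finset.mul_sum, Finset.sum_mul]
      refine Finset.sum_congr rfl fun k hk => ?_
      rw [hS_def, ← map_mul, ← map_mul, g2 k (hmemlt k hk)]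
    rw [hJMjj, mul_add, hSS, hST]
    abel
  -- the conjugation ring homomorphism
  set φ : MonoidAlgebra ℤ (Equiv.Perm (Fin n)) →+* MonoidAlgebra ℤ (Equiv.Perm (Fin n)) :=
    conjHom S hSS with hφ_def
  have hφ_apply : ∀ x, φ x = S * x * S := fun x => rfl
  have hK_other : ∀ l : Fin n, l ≠ ii → l ≠ jj → φ (JM n l) = JM n l := by
    intro l hl1 hl2
    have hli : (l : ℕ) ≠ i := by simpa [hii_def, Fin.ext_iff] using hl1
    have hlj : (l : ℕ) ≠ i + 1 := by simpa [hjj_def, Fin.ext_iff] using hl2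
    have hcomm : MonoidAlgebra.of ℤ (Equiv.Perm (Fin n)) s * JM n l
        = JM n l * MonoidAlgebra.of ℤ (Equiv.Perm (Fin n)) s := by
      refine JM_comm_of n s l (Equiv.swap_apply_of_ne_of_ne hl1 hl2) ?_
      intro m
      rcases eq_or_ne m ii with rfl | hm1
      · rw [hsii]
        simp only [Fin.lt_def, hii_def, hjj_def]
        constructor <;> (intro h; omega)
      rcases eq_or_ne m jj with rfl | hm2
      · rw [hsjj]
        simp only [Fin.lt_def, hii_def, hjj_def]
        constructor <;> (intro h; omega)
      · rw [hs_def, Equiv.swap_apply_of_ne_of_ne hm1 hm2]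
    rw [hφ_apply, ← hS_def] at *
    rw [hcomm, mul_assoc, hSS, mul_one]
  have hK_ii : φ (JM n ii) = JM n jj - S := by
    rw [hφ_apply, hsa, sub_mul, one_mul, mul_assoc, hSS, mul_one]
  have hK_jj : φ (JM n jj) = JM n ii + S := by
    rw [hφ_apply, hsb, add_mul, one_mul, mul_assoc, hSS, mul_one]
  -- facts about exponent swapping
  have hsinv : ∀ m : Fin n, s (s m) = m := fun m => Equiv.swap_apply_self _ _ m
  have hD : ∀ d : Fin n →₀ ℕ, Finsupp.mapDomain ⇑s (Finsupp.mapDomain ⇑s d) = d := by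
    intro d
    rw [← Finsupp.mapDomain_comp]
    have hcomp : ⇑s ∘ ⇑s = id := funext hsinv
    rw [hcomp, Finsupp.mapDomain_id]
  have hDapp : ∀ (d : Fin n →₀ ℕ) (l : Fin n), (Finsupp.mapDomain ⇑s d) l = d (s l) := by
    intro d l
    conv_lhs => rw [show l = s (s l) from (hsinv l).symm]
    rw [Finsupp.mapDomain_apply (Equiv.injective s)]
  have hcoeff : ∀ d : Fin n →₀ ℕ, F.coeff (Finsupp.mapDomain ⇑s d) = F.coeff d := by
    intro d
    have h := MvPolynomial.coeff_rename_mapDomain ⇑s (Equiv.injective s) F d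
    rwa [hF s] at h
  set K : Fin n → MonoidAlgebra ℤ (Equiv.Perm (Fin n)) := fun j => φ (JM n j) with hK_def
  set D : (Fin n →₀ ℕ) → (Fin n →₀ ℕ) := Finsupp.mapDomain ⇑s with hDmap_def
  have hKii' : K ii = JM n jj - S := hK_ii
  have hKjj' : K jj = JM n ii + S := hK_jj
  have hpoint : ∀ d : Fin n →₀ ℕ,
      ((List.finRange n).map (fun l => K l ^ d l)).prod
        + ((List.finRange n).map (fun l => K l ^ (D d) l)).prod
      = ((List.finRange n).map (fun l => JM n l ^ d l)).prod
        + ((List.finRange n).map (fun l => JM n l ^ (D d) l)).prod := by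
    intro d
    have hfact : ∀ (P Q u1 v1 u2 v2 : MonoidAlgebra ℤ (Equiv.Perm (Fin n))),
        P*(u1*(v1*Q)) + P*(u2*(v2*Q)) = P*((u1*v1 + u2*v2)*Q) := by
      intro P Q u1 v1 u2 v2
      rw [add_mul, mul_add, mul_assoc, mul_assoc]
    have hne : ∀ l : Fin n, (l:ℕ) ≠ i → (l:ℕ) ≠ i+1 → (l ≠ ii ∧ l ≠ jj) := by
      intro l hA hB
      exact ⟨by simp [hii_def, Fin.ext_iff]; omega, by simp [hjj_def, Fin.ext_iff]; omega⟩
    have hother : ∀ l : Fin n, l ≠ ii → l ≠ jj →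
        (K l ^ d l = JM n l ^ d l ∧ K l ^ (D d) l = JM n l ^ d l
          ∧ JM n l ^ (D d) l = JM n l ^ d l) := by
      intro l h1' h2'
      have hKl : K l = JM n l := hK_other l h1' h2'
      have hDl : (D d) l = d l := by
        rw [hDapp, hs_def, Equiv.swap_apply_of_ne_of_ne h1' h2']
      exact ⟨by rw [hKl], by rw [hKl, hDl], by rw [hDl]⟩
    have htake : ∀ (g : Fin n → MonoidAlgebra ℤ (Equiv.Perm (Fin n))) (δ : Fin n →₀ ℕ),
        (∀ l : Fin n, l ≠ ii → l ≠ jj → g l ^ δ l = JM n l ^ d l) →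
        ((List.finRange n).take i).map (fun l => g l ^ δ l)
          = ((List.finRange n).take i).map (fun l => JM n l ^ d l) := by
      intro g δ hg
      refine List.map_congr_left fun l hl => ?_
      have hlt := mem_take_lt n i l hl
      obtain ⟨hl1, hl2⟩ := hne l (by omega) (by omega)
      exact hg l hl1 hl2
    have hdrop : ∀ (g : Fin n → MonoidAlgebra ℤ (Equiv.Perm (Fin n))) (δ : Fin n →₀ ℕ),
        (∀ l : Fin n, l ≠ ii → l ≠ jj → g l ^ δ l = JM n l ^ d l) →
        ((List.finRange n).drop (i+2)).map (fun l => g l ^ δ l)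
          = ((List.finRange n).drop (i+2)).map (fun l => JM n l ^ d l) := by
      intro g δ hg
      refine List.map_congr_left fun l hl => ?_
      have hlt := mem_drop_ge n (i+2) l hl
      obtain ⟨hl1, hl2⟩ := hne l (by omega) (by omega)
      exact hg l hl1 hl2
    have hDii : (D d) ii = d jj := by rw [hDapp, hsii]
    have hDjj : (D d) jj = d ii := by rw [hDapp, hsjj]
    rw [prod_split n i h1 (fun l => K l ^ d l), prod_split n i h1 (fun l => K l ^ (D d) l),
      prod_split n i h1 (fun l => JM n l ^ d l),
      prod_split n i h1 (fun l => JM n l ^ (D d) l)]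
    rw [htake K d (fun l a b => (hother l a b).1),
      htake K (D d) (fun l a b => (hother l a b).2.1),
      htake (JM n) (D d) (fun l a b => (hother l a b).2.2),
      hdrop K d (fun l a b => (hother l a b).1),
      hdrop K (D d) (fun l a b => (hother l a b).2.1),
      hdrop (JM n) (D d) (fun l a b => (hother l a b).2.2)]
    rw [show (⟨i, Nat.lt_of_succ_lt h1⟩ : Fin n) = ii from rfl,
      show (⟨i+1, h1⟩ : Fin n) = jj from rfl]
    rw [hKii', hKjj', hDii, hDjj]
    rw [hfact, hfact,
      pair_eq (JM n ii) (JM n jj) S hSS ((JM_commute n ii jj).eq) hsa hsb (d ii) (d jj)]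
  have hEval : ∀ g : Fin n → MonoidAlgebra ℤ (Equiv.Perm (Fin n)),
      mvEval F g = ∑ d ∈ F.support,
        F.coeff d • ((List.finRange n).map (fun l => g l ^ d l)).prod := fun g => by
      unfold mvEval; rfl
  have hswapgen : ∀ g : Fin n → MonoidAlgebra ℤ (Equiv.Perm (Fin n)),
      ∑ d ∈ F.support, F.coeff d • ((List.finRange n).map (fun l => g l ^ d l)).prod
        = ∑ d ∈ F.support,
            F.coeff d • ((List.finRange n).map (fun l => g l ^ (D d) l)).prod := by
    intro g
    refine Finset.sum_nbij' D D ?_ ?_ ?_ ?_ ?_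
    · intro d hd
      rw [MvPolynomial.mem_support_iff] at *
      rwa [hcoeff d]
    · intro d hd
      rw [MvPolynomial.mem_support_iff] at *
      rwa [hcoeff d]
    · intro d _; exact hD d
    · intro d _; exact hD d
    · intro d _
      rw [hD d, hcoeff d]
  have h2 : mvEval F K + mvEval F K = mvEval F (JM n) + mvEval F (JM n) := by
    rw [hEval K, hEval (JM n)]
    nth_rewrite 2 [hswapgen K]
    nth_rewrite 2 [hswapgen (JM n)]
    rw [← Finset.sum_add_distrib, ← Finset.sum_add_distrib]
    refine Finset.sum_congr rfl fun d _ => ?_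
    rw [← smul_add, ← smul_add, hpoint d]
  have hKJ : mvEval F K = mvEval F (JM n) := by
    refine MonoidAlgebra.ext (Finsupp.ext fun g => ?_)
    have hg := congrArg (fun z : MonoidAlgebra ℤ (Equiv.Perm (Fin n)) => z.coeff g) h2
    simp only [MonoidAlgebra.coeff_add, Finsupp.add_apply] at hg
    have hg' : (mvEval F K).coeff g + (mvEval F K).coeff g
        = (mvEval F (JM n)).coeff g + (mvEval F (JM n)).coeff g := hg
    omega
  have hφx : S * mvEval F (JM n) * S = mvEval F (JM n) := by
    calc S * mvEval F (JM n) * S = φ (mvEval F (JM n)) := rfl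
      _ = mvEval F K := by rw [hK_def]; exact map_mvEval φ F (JM n)
      _ = mvEval F (JM n) := hKJ
  have hfin := congrArg (fun z => z * S) hφx
  rw [mul_assoc, hSS, mul_one] at hfin
  exact hfin

lemma central_JM (n : ℕ) (F : MvPolynomial (Fin n) ℤ) (hF : F.IsSymmetric)
    (τ : Equiv.Perm (Fin n)) :
    MonoidAlgebra.of ℤ (Equiv.Perm (Fin n)) τ * mvEval F (JM n)
      = mvEval F (JM n) * MonoidAlgebra.of ℤ (Equiv.Perm (Fin n)) τ := by
  cases n with
  | zero =>
    have hτ : τ = 1 := Equiv.ext fun x => x.elim0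
    rw [hτ, map_one, one_mul, mul_one]
  | succ m =>
    have hτ : τ ∈ Submonoid.closure
        (Set.range fun i : Fin m => Equiv.swap i.castSucc i.succ) := by
      rw [Equiv.Perm.mclosure_swap_castSucc_succ]
      trivial
    induction hτ using Submonoid.closure_induction with
    | mem x hx =>
      obtain ⟨k, rfl⟩ := hx
      have hk1 : (k : ℕ) + 1 < m + 1 := by omega
      have hcast : Equiv.swap k.castSucc k.succ
          = Equiv.swap (⟨(k:ℕ), Nat.lt_of_succ_lt hk1⟩ : Fin (m+1)) ⟨(k:ℕ)+1, hk1⟩ := by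
        rfl
      show MonoidAlgebra.of ℤ (Equiv.Perm (Fin (m+1))) (Equiv.swap k.castSucc k.succ)
            * mvEval F (JM (m+1))
          = mvEval F (JM (m+1))
            * MonoidAlgebra.of ℤ (Equiv.Perm (Fin (m+1))) (Equiv.swap k.castSucc k.succ)
      rw [hcast]
      exact adj_invariant (m+1) k hk1 F hF
    | one => rw [map_one, one_mul, mul_one]
    | mul x y hx hy ihx ihy =>
      rw [map_mul, mul_assoc, ihy, ← mul_assoc, ihx, mul_assoc]

/-- For a symmetric polynomial `F`, the coefficient of a permutation `σ` in
`F(J_1,…,J_n)` depends only on the conjugacy class (cycle type) of `σ`: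
conjugate permutations have equal coefficients. -/
theorem coeff_symmetric_jucysMurphy_conj_invariant (n : ℕ) (F : MvPolynomial (Fin n) ℤ)
    (hF : F.IsSymmetric) (σ τ : Equiv.Perm (Fin n)) :
    coeffOf (mvEval F (JM n)) (τ * σ * τ⁻¹) = coeffOf (mvEval F (JM n)) σ := by
  have h := central_JM n F hF τ
  have hg := congrArg (fun z : MonoidAlgebra ℤ (Equiv.Perm (Fin n)) => z.coeff (τ * σ)) h
  simp only [MonoidAlgebra.of_apply, MonoidAlgebra.coeff_single_mul_apply,
    MonoidAlgebra.coeff_mul_single_apply, one_mul, mul_one, inv_mul_cancel_left] at hg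
  have hg' : coeffOf (mvEval F (JM n)) σ
      = coeffOf (mvEval F (JM n)) (τ * σ * τ⁻¹) := hg
  exact hg'.symm
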